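/- Let D be a semi-complete digraph, let c be a nonnegative integer, and let π be a vertex ordering of D of width at most c. If u, v ∈ V(D) satisfy π(u) < π(v) − 3c, then there exist c + 1 pairwise arc-disjoint directed paths in D from u to v. -/

import Mathlib

open Finset

variable {V : Type*} [Fintype V] [DecidableEq V]

/-- The set of the first `i` vertices in the vertex ordering `π`. -/
def prefixSet (π : V ≃ Fin (Fintype.card V)) (i : ℕ) : Finset V :=
  Finset.univ.filter (fun v => (π v : ℕ) < i)

/-- The set of the last `n - i` vertices in the vertex ordering `π`. -/
def suffixSet (π : V ≃ Fin (Fintype.card V)) (i : ℕ) : Finset V :=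
  Finset.univ.filter (fun v => i ≤ (π v : ℕ))

/-- The cut at position `i`: the arcs from outside the length-`i` prefix into the prefix. -/
def cutFinset (E : V → V → Prop) [DecidableRel E]
    (π : V ≃ Fin (Fintype.card V)) (i : ℕ) : Finset (V × V) :=
  Finset.univ.filter (fun p : V × V => E p.1 p.2 ∧ i ≤ (π p.1 : ℕ) ∧ (π p.2 : ℕ) < i)

/-- The size of the cut at position `i`. -/
def cutSize (E : V → V → Prop) [DecidableRel E]
    (π : V ≃ Fin (Fintype.card V)) (i : ℕ) : ℕ :=
  (cutFinset E π i).card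

/-- The width of a vertex ordering. -/
def widthOf (E : V → V → Prop) [DecidableRel E] (π : V ≃ Fin (Fintype.card V)) : ℕ :=
  (Finset.range (Fintype.card V + 1)).sup (cutSize E π)

/-- The cutwidth of a digraph. -/
noncomputable def cutwidth (E : V → V → Prop) [DecidableRel E] : ℕ :=
  sInf {w | ∃ π : V ≃ Fin (Fintype.card V), widthOf E π = w}

/-- The OLA-cost of a vertex ordering. -/
def olaOf (E : V → V → Prop) [DecidableRel E] (π : V ≃ Fin (Fintype.card V)) : ℕ :=
  ∑ i ∈ Finset.range (Fintype.card V + 1), cutSize E π i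

/-- The OLA-cost of a digraph. -/
noncomputable def ola (E : V → V → Prop) [DecidableRel E] : ℕ :=
  sInf {w | ∃ π : V ≃ Fin (Fintype.card V), olaOf E π = w}

/-- The arcs of a path given as a list of vertices. -/
def pathArcs (l : List V) : List (V × V) := l.zip l.tail

/-- `l` is a directed path (walk) from `u` to `v` in the digraph `E`. -/
def IsPath (E : V → V → Prop) (u v : V) (l : List V) : Prop :=
  l.head? = some u ∧ l.getLast? = some v ∧ List.Chain' E l

/-- In a semi-complete digraph with an ordering of width at most `c`,
if `u` is more than `3c` positions before `v`, then there are `c + 1` pairwise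
arc-disjoint directed paths from `u` to `v`. -/
theorem arc_disjoint_paths_of_far_apart (E : V → V → Prop) [DecidableRel E]
    (hirr : ∀ w : V, ¬ E w w)
    (hsc : ∀ u v : V, u ≠ v → E u v ∨ E v u)
    (c : ℕ) (π : V ≃ Fin (Fintype.card V)) (hw : widthOf E π ≤ c)
    (u v : V) (hfar : (π u : ℕ) + 3 * c < (π v : ℕ)) :
    ∃ P : Fin (c + 1) → List V,
      (∀ i, IsPath E u v (P i)) ∧
      (∀ i j, i ≠ j → ∀ e : V × V, e ∈ pathArcs (P i) → e ∉ pathArcs (P j)) := by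

  classical
  have hp : (π u : ℕ) + 3 * c < (π v : ℕ) := hfar
  set p := (π u : ℕ) with hpd
  set q := (π v : ℕ) with hqd
  have hqn : q < Fintype.card V := (π v).isLt
  have hne : u ≠ v := by intro h; rw [h] at hpd; omega
  have hcut : ∀ i, i ≤ Fintype.card V → cutSize E π i ≤ c := fun i hi =>
    le_trans (Finset.le_sup (Finset.mem_range.mpr (Nat.lt_succ_of_le hi))) hw
  set B : Finset V := univ.filter (fun w => p < (π w : ℕ) ∧ (π w : ℕ) < q) with hBdef
  have hmemB : ∀ w ∈ B, p < (π w : ℕ) ∧ (π w : ℕ) < q := by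
    intro w hw'
    simpa [hBdef] using hw'
  have hBcard : 3 * c ≤ B.card := by
    have h1 : (Finset.Ioo p q).card ≤ B.card := by
      apply Finset.card_le_card_of_injOn (fun k => if h : k < Fintype.card V then π.symm ⟨k, h⟩ else u)
      · intro k hk
        rw [Finset.mem_coe, Finset.mem_Ioo] at hk
        have hkn : k < Fintype.card V := lt_trans hk.2 hqn
        simp only [Finset.mem_coe, dif_pos hkn]
        simp only [hBdef, Finset.mem_filter, Finset.mem_univ, true_and,
          Equiv.apply_symm_apply]
        exact hk
      · intro k1 hk1 k2 hk2 hk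
        rw [Finset.mem_coe, Finset.mem_Ioo] at hk1 hk2
        simp only [dif_pos (lt_trans hk1.2 hqn), dif_pos (lt_trans hk2.2 hqn)] at hk
        exact congrArg Fin.val (π.symm.injective hk)
    rw [Nat.card_Ioo] at h1
    omega
  set Bad1 : Finset V := B.filter (fun w => ¬ E u w) with hBad1def
  set Bad2 : Finset V := B.filter (fun w => ¬ E w v) with hBad2def
  set G : Finset V := B.filter (fun w => E u w ∧ E w v) with hGdef
  have hBad2c : Bad2.card ≤ c := by
    refine le_trans ?_ (hcut q hqn.le)
    apply Finset.card_le_card_of_injOn (fun w => (v, w))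
    · intro w hw'
      simp only [hBad2def, Finset.mem_coe, Finset.mem_filter] at hw'
      obtain ⟨hwB, hnE⟩ := hw'
      obtain ⟨h1, h2⟩ := hmemB w hwB
      have hwv : w ≠ v := by intro h; rw [h] at h2; omega
      have hEvw : E v w := (hsc w v hwv).resolve_left hnE
      simp only [cutFinset, Finset.mem_coe, Finset.mem_filter, Finset.mem_univ, true_and]
      exact ⟨hEvw, by omega, h2⟩
    · intro a _ b _ h
      exact congrArg Prod.snd h
  have himg : Finset.image (fun w => (w, u)) Bad1 ⊆ cutFinset E π (p + 1) := by
    intro x hx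
    obtain ⟨w, hw', rfl⟩ := Finset.mem_image.mp hx
    simp only [hBad1def, Finset.mem_filter] at hw'
    obtain ⟨hwB, hnE⟩ := hw'
    obtain ⟨h1, h2⟩ := hmemB w hwB
    have hwu : w ≠ u := by intro h; rw [h] at h1; omega
    have hEwu : E w u := (hsc u w (Ne.symm hwu)).resolve_left hnE
    simp only [cutFinset, Finset.mem_filter, Finset.mem_univ, true_and]
    exact ⟨hEwu, by omega, by omega⟩
  have himgcard : (Finset.image (fun w => (w, u)) Bad1).card = Bad1.card :=
    Finset.card_image_of_injective _ (fun a b h => congrArg Prod.fst h)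
  have hcover : B.card ≤ G.card + Bad1.card + Bad2.card := by
    have hsub : B ⊆ G ∪ Bad1 ∪ Bad2 := by
      intro w hw'
      simp only [hGdef, hBad1def, hBad2def, Finset.mem_union, Finset.mem_filter]
      by_cases h1 : E u w
      · by_cases h2 : E w v
        · exact Or.inl (Or.inl ⟨hw', h1, h2⟩)
        · exact Or.inr ⟨hw', h2⟩
      · exact Or.inl (Or.inr ⟨hw', h1⟩)
    calc B.card ≤ (G ∪ Bad1 ∪ Bad2).card := Finset.card_le_card hsub
      _ ≤ (G ∪ Bad1).card + Bad2.card := Finset.card_union_le _ _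
      _ ≤ G.card + Bad1.card + Bad2.card := by
          have := Finset.card_union_le G Bad1; omega
  have hGprop : ∀ w ∈ G, E u w ∧ E w v := by
    intro w hw'
    simp only [hGdef, Finset.mem_filter] at hw'
    exact hw'.2
  have main : ∃ G' : Finset V, c + 1 ≤ G'.card ∧
      ∀ w ∈ G', (E u w ∧ E w v) ∨ (w = v ∧ E u v) := by
    by_cases huv : E u v
    · have hBad1c : Bad1.card ≤ c :=
        le_trans (himgcard ▸ Finset.card_le_card himg) (hcut (p + 1) (by omega))
      have hvG : v ∉ G := by
        intro h
        simp only [hGdef, Finset.mem_filter] at h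
        have := (hmemB v h.1).2; omega
      refine ⟨insert v G, ?_, ?_⟩
      · rw [Finset.card_insert_of_notMem hvG]; omega
      · intro w hw'
        rcases Finset.mem_insert.mp hw' with rfl | hwG
        · exact Or.inr ⟨rfl, huv⟩
        · exact Or.inl (hGprop w hwG)
    · have hvu : E v u := (hsc u v hne).resolve_left huv
      have hvumem : (v, u) ∈ cutFinset E π (p + 1) := by
        simp only [cutFinset, Finset.mem_filter, Finset.mem_univ, true_and]
        exact ⟨hvu, by omega, by omega⟩
      have hvnot : (v, u) ∉ Finset.image (fun w => (w, u)) Bad1 := by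
        intro h
        obtain ⟨w, hw', hwe⟩ := Finset.mem_image.mp h
        have hwv : w = v := congrArg Prod.fst hwe
        simp only [hBad1def, Finset.mem_filter] at hw'
        have := (hmemB w hw'.1).2
        rw [hwv] at this; omega
      have hins : Bad1.card + 1 ≤ c := by
        have hsub2 : insert (v, u) (Finset.image (fun w => (w, u)) Bad1) ⊆
            cutFinset E π (p + 1) := Finset.insert_subset hvumem himg
        have h3 := Finset.card_le_card hsub2
        rw [Finset.card_insert_of_notMem hvnot, himgcard] at h3
        exact le_trans h3 (hcut (p + 1) (by omega))
      exact ⟨G, by omega, fun w hw' => Or.inl (hGprop w hw')⟩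
  obtain ⟨G', hG'card, hG'⟩ := main
  obtain ⟨T, hTsub, hTcard⟩ := Finset.exists_subset_card_eq hG'card
  let e := T.equivFinOfCardEq hTcard
  set f : Fin (c + 1) → V := fun i => ((e.symm i : T) : V) with hfdef
  have hfinj : Function.Injective f := fun i j h =>
    e.symm.injective (Subtype.ext h)
  have hfmem : ∀ i, f i ∈ G' := fun i => hTsub (e.symm i).2
  have hkey : ∀ i, f i ≠ v → E u (f i) ∧ E (f i) v ∧ f i ≠ u := by
    intro i hne'
    rcases hG' _ (hfmem i) with ⟨h1, h2⟩ | ⟨h1, _⟩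
    · exact ⟨h1, h2, fun h => hirr u (h ▸ h1)⟩
    · exact absurd h1 hne'
  have huvv : ∀ i, f i = v → E u v := by
    intro i hi
    rcases hG' _ (hfmem i) with ⟨_, h2⟩ | ⟨_, h2⟩
    · exact absurd (hi ▸ h2) (hirr v)
    · exact h2
  refine ⟨fun i => if f i = v then [u, v] else [u, f i, v], ?_, ?_⟩
  · intro i
    by_cases hi : f i = v
    · simp only [if_pos hi]
      refine ⟨rfl, rfl, ?_⟩
      simp only [List.Chain', List.isChain_cons_cons, List.isChain_singleton, and_true]
      exact huvv i hi
    · simp only [if_neg hi]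
      obtain ⟨h1, h2, h3⟩ := hkey i hi
      refine ⟨rfl, rfl, ?_⟩
      simp only [List.Chain', List.isChain_cons_cons, List.isChain_singleton, and_true]
      exact ⟨h1, h2⟩
  · intro i j hij a hai haj
    have hfij : f i ≠ f j := fun h => hij (hfinj h)
    by_cases hi : f i = v <;> by_cases hj : f j = v
    · exact hfij (hi.trans hj.symm)
    · simp only [if_pos hi] at hai
      simp only [if_neg hj] at haj
      obtain ⟨h1, h2, h3⟩ := hkey j hj
      simp only [pathArcs, List.tail_cons, List.zip_cons_cons, List.zip_nil_right,
        List.mem_cons, List.mem_singleton, List.not_mem_nil, or_false] at hai haj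
      subst hai
      rcases haj with h | h
      · exact hj (congrArg Prod.snd h).symm
      · exact h3 (congrArg Prod.fst h).symm
    · simp only [if_neg hi] at hai
      simp only [if_pos hj] at haj
      obtain ⟨h1, h2, h3⟩ := hkey i hi
      simp only [pathArcs, List.tail_cons, List.zip_cons_cons, List.zip_nil_right,
        List.mem_cons, List.mem_singleton, List.not_mem_nil, or_false] at hai haj
      subst haj
      rcases hai with h | h
      · exact hi (congrArg Prod.snd h).symm
      · exact h3 (congrArg Prod.fst h).symm
    · simp only [if_neg hi] at hai
      simp only [if_neg hj] at haj
      obtain ⟨hi1, hi2, hi3⟩ := hkey i hi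
      obtain ⟨hj1, hj2, hj3⟩ := hkey j hj
      simp only [pathArcs, List.tail_cons, List.zip_cons_cons, List.zip_nil_right,
        List.mem_cons, List.mem_singleton, List.not_mem_nil, or_false] at hai haj
      rcases hai with h | h <;> subst h <;> rcases haj with h | h
      · exact hfij (congrArg Prod.snd h)
      · exact hi (congrArg Prod.snd h)
      · exact hi3 (congrArg Prod.fst h)
      · exact hfij ((congrArg Prod.fst h))
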